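/- The subset of the torus-times-sphere T² × S² (parameterized by (γ, θ) ∈ T² and (α, β) spherical coordinates on S²) cut out by the equation sin γ cos α = 0 is homeomorphic to the union of a 3-torus T³ and two copies of S¹ × S², glued along two disjoint 2-tori. -/

import Mathlib

open Real

noncomputable section

/-- The unit 2-sphere in `ℝ³`. -/
abbrev S2 : Type := Metric.sphere (0 : EuclideanSpace ℝ (Fin 3)) 1

/-- The subset of `T² × S²` cut out by `sin γ · cos α = 0`, where `cos α` is the
`k`-component (third coordinate) of the sphere point. -/
def VSet : Set ((Real.Angle × Real.Angle) × S2) :=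
  {p | p.1.1.sin * ((p.2 : EuclideanSpace ℝ (Fin 3)) 2) = 0}

/-- The piece `cos α = 0` of `VSet` (a 3-torus). -/
def ASet : Set ((Real.Angle × Real.Angle) × S2) :=
  {p | ((p.2 : EuclideanSpace ℝ (Fin 3)) 2) = 0}

/-- The piece `sin γ = 0` of `VSet` (two copies of `S¹ × S²`). -/
def BSet : Set ((Real.Angle × Real.Angle) × S2) :=
  {p | p.1.1.sin = 0}

/-! ### Auxiliary constructions -/

/-- The set `{0, π}` in the circle. -/
def DSet : Set Real.Angle := {θ | θ.sin = 0}

/-- The equatorial circle in the sphere. -/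
def CSet : Set S2 := {x | ((x : EuclideanSpace ℝ (Fin 3)) 2) = 0}

def fD : Bool → DSet := fun b =>
  ⟨if b then (π : Real.Angle) else 0, by
    cases b <;> simp [DSet, Real.Angle.sin_coe_pi]⟩

lemma fD_bij : Function.Bijective fD := by
  constructor
  · intro a b hab
    cases a <;> cases b <;> simp [fD, Subtype.ext_iff] at hab ⊢ <;>
      first
        | exact absurd hab.symm Real.Angle.pi_ne_zero
        | exact absurd hab Real.Angle.pi_ne_zero
  · rintro ⟨θ, hθ⟩
    rcases Real.Angle.sin_eq_zero_iff.mp hθ with h | h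
    · exact ⟨false, by simp [fD, h]⟩
    · exact ⟨true, by simp [fD, h]⟩

def homeoD : Bool ≃ₜ DSet :=
  Continuous.homeoOfEquivCompactToT2
    (f := Equiv.ofBijective fD fD_bij) continuous_of_discreteTopology

/-- The circle map into the equator. -/
def fC : Real.Angle → CSet := fun γ =>
  ⟨⟨(EuclideanSpace.equiv (Fin 3) ℝ).symm ![γ.cos, γ.sin, 0], by
      rw [mem_sphere_zero_iff_norm, EuclideanSpace.norm_eq]
      have : ∀ i : Fin 3,
          ((EuclideanSpace.equiv (Fin 3) ℝ).symm ![γ.cos, γ.sin, 0]) i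
            = ![γ.cos, γ.sin, 0] i := fun i => rfl
      simp only [this, Fin.sum_univ_three]
      simp [Real.Angle.cos_sq_add_sin_sq]⟩, by
    simp only [CSet, Set.mem_setOf_eq]
    rfl⟩

lemma fC_coord (γ : Real.Angle) (i : Fin 3) :
    (((fC γ : S2) : EuclideanSpace ℝ (Fin 3))) i = ![γ.cos, γ.sin, 0] i := rfl

lemma fC_continuous : Continuous fC := by
  apply Continuous.subtype_mk
  apply Continuous.subtype_mk
  apply ((EuclideanSpace.equiv (Fin 3) ℝ).symm.continuous).comp
  apply continuous_pi
  intro i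
  fin_cases i
  · simpa using Real.Angle.continuous_cos
  · simpa using Real.Angle.continuous_sin
  · simpa using continuous_const

lemma fC_bij : Function.Bijective fC := by
  constructor
  · intro γ γ' h
    have h0 : Real.Angle.cos γ = Real.Angle.cos γ' :=
      congrArg (fun x : CSet => (x.1.1 : EuclideanSpace ℝ (Fin 3)) 0) h
    have h1 : Real.Angle.sin γ = Real.Angle.sin γ' :=
      congrArg (fun x : CSet => (x.1.1 : EuclideanSpace ℝ (Fin 3)) 1) h
    induction γ using Real.Angle.induction_on
    induction γ' using Real.Angle.induction_on
    exact Real.Angle.cos_sin_inj (by simpa using h0) (by simpa using h1)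
  · rintro ⟨⟨v, hv⟩, hv2⟩
    simp only [CSet, Set.mem_setOf_eq] at hv2
    rw [mem_sphere_zero_iff_norm, EuclideanSpace.norm_eq] at hv
    have hsum : v 0 ^ 2 + v 1 ^ 2 = 1 := by
      have h1 := Real.sqrt_eq_one.mp hv
      rw [Fin.sum_univ_three] at h1
      simp only [Real.norm_eq_abs, sq_abs, hv2] at h1
      nlinarith [h1]
    set z : ℂ := ⟨v 0, v 1⟩ with hz
    have habs : ‖z‖ = 1 := by
      rw [Complex.norm_def, Complex.normSq_apply]
      simp only [hz]
      rw [show v 0 * v 0 + v 1 * v 1 = v 0 ^ 2 + v 1 ^ 2 by ring, hsum, Real.sqrt_one]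
    have hzne : z ≠ 0 := by
      intro h; rw [h] at habs; simp at habs
    refine ⟨(z.arg : Real.Angle), ?_⟩
    have hcos : Real.cos z.arg = v 0 := by
      rw [Complex.cos_arg hzne, habs]; simp [hz]
    have hsin : Real.sin z.arg = v 1 := by
      rw [Complex.sin_arg, habs]; simp [hz]
    apply Subtype.ext
    apply Subtype.ext
    ext i
    rw [show (((fC (z.arg : Real.Angle) : CSet) : S2) : EuclideanSpace ℝ (Fin 3)) i
        = ![Real.Angle.cos (z.arg : Real.Angle), Real.Angle.sin (z.arg : Real.Angle), 0] i
      from rfl]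
    fin_cases i
    · simpa using hcos
    · simpa using hsin
    · simpa using hv2.symm

instance : Fact ((0:ℝ) < 2 * π) := ⟨by positivity⟩

instance : CompactSpace Real.Angle :=
  inferInstanceAs (CompactSpace (AddCircle (2 * π)))

instance : CompactSpace CSet := by
  rw [← isCompact_iff_compactSpace]
  have : IsClosed CSet := by
    have : Continuous fun x : S2 => ((x : EuclideanSpace ℝ (Fin 3)) 2) :=
      (continuous_apply 2).comp ((PiLp.continuous_ofLp 2 _).comp continuous_subtype_val)
    exact isClosed_eq this continuous_const
  exact this.isCompact

def homeoC : Real.Angle ≃ₜ CSet :=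
  Continuous.homeoOfEquivCompactToT2
    (f := Equiv.ofBijective fC fC_bij) fC_continuous

lemma hA_eq : ASet = (Set.univ : Set (Real.Angle × Real.Angle)) ×ˢ CSet := by
  ext ⟨⟨γ, θ⟩, x⟩; simp [ASet, CSet]

lemma hB_eq : BSet =
    ((DSet ×ˢ (Set.univ : Set Real.Angle)) ×ˢ (Set.univ : Set S2)) := by
  ext ⟨⟨γ, θ⟩, x⟩; simp [BSet, DSet]

lemma hAB_eq : ASet ∩ BSet =
    ((DSet ×ˢ (Set.univ : Set Real.Angle)) ×ˢ CSet) := by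
  ext ⟨⟨γ, θ⟩, x⟩; simp [ASet, BSet, DSet, CSet, and_comm]

/-- The locus `sin γ cos α = 0` in `T² × S²` is the union of a 3-torus and
`S⁰ × S¹ × S²`, glued along two disjoint 2-tori (`S⁰ × T²`). -/
theorem stmt11 :
    VSet = ASet ∪ BSet ∧
    Nonempty (ASet ≃ₜ (Real.Angle × Real.Angle × Real.Angle)) ∧
    Nonempty (BSet ≃ₜ (Bool × Real.Angle × S2)) ∧
    Nonempty ((ASet ∩ BSet : Set ((Real.Angle × Real.Angle) × S2)) ≃ₜ
      (Bool × Real.Angle × Real.Angle)) := by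
  refine ⟨?_, ⟨?_⟩, ⟨?_⟩, ⟨?_⟩⟩
  · ext ⟨⟨γ, θ⟩, x⟩
    simp [VSet, ASet, BSet, mul_eq_zero, or_comm]
  · exact (Homeomorph.setCongr hA_eq).trans <|
      (Homeomorph.Set.prod _ _).trans <|
      ((Homeomorph.Set.univ _).prodCongr homeoC.symm).trans
        (Homeomorph.prodAssoc _ _ _)
  · exact (Homeomorph.setCongr hB_eq).trans <|
      (Homeomorph.Set.prod _ _).trans <|
      (((Homeomorph.Set.prod _ _).trans
        (homeoD.symm.prodCongr (Homeomorph.Set.univ _))).prodCongr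
        (Homeomorph.Set.univ _)).trans
        (Homeomorph.prodAssoc _ _ _)
  · exact (Homeomorph.setCongr hAB_eq).trans <|
      (Homeomorph.Set.prod _ _).trans <|
      (((Homeomorph.Set.prod _ _).trans
        (homeoD.symm.prodCongr (Homeomorph.Set.univ _))).prodCongr
        homeoC.symm).trans
        (Homeomorph.prodAssoc _ _ _)
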